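/- arXiv:2106.02265 — 3 statements merged into one kernel-verified Lean document; each statement's English description precedes it below -/
import Mathlib

section
/- Let F be a finite field of characteristic 5 with |F| = 5^k and G = C_3 × D_10. Then V = 1 + J(FG) is a group of order 5^{24k} and satisfies v⁵ = 1 for every v ∈ V (i.e., V has exponent 5). -/
open MonoidAlgebra

namespace Stmt11

abbrev G5 : Type := Multiplicative (ZMod 3) × DihedralGroup 5
abbrev Q6 : Type := Multiplicative (ZMod 3) × Multiplicative (ZMod 2)

def dsgn : DihedralGroup 5 →* Multiplicative (ZMod 2) where
  toFun x := Multiplicative.ofAdd (match x with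
    | .r _ => 0
    | .sr _ => 1)
  map_one' := rfl
  map_mul' := by
    rintro (i | i) (j | j) <;> simp only [DihedralGroup.r_mul_r, DihedralGroup.r_mul_sr,
      DihedralGroup.sr_mul_r, DihedralGroup.sr_mul_sr] <;> rfl

def qhom : G5 →* Q6 := (MonoidHom.id (Multiplicative (ZMod 3))).prodMap dsgn

def sec : Q6 → G5 := fun b =>
  (b.1, if b.2 = Multiplicative.ofAdd 0 then DihedralGroup.r 0 else DihedralGroup.sr 0)

lemma qhom_sec (b : Q6) : qhom (sec b) = b := by
  obtain ⟨c, e⟩ := b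
  have he : ∀ e : Multiplicative (ZMod 2),
      e = Multiplicative.ofAdd 0 ∨ e = Multiplicative.ofAdd 1 := by decide
  rcases he e with rfl | rfl <;> simp [sec, qhom, dsgn] <;> rfl


variable (F : Type) [Field F]

noncomputable def aelt : MonoidAlgebra F G5 := of F G5 (1, .r 1) - 1

noncomputable def Ia : Ideal (MonoidAlgebra F G5) := Ideal.span {aelt F}

lemma aelt_mem_Ia : aelt F ∈ Ia F := Ideal.subset_span rfl

lemma aelt_mul (y : MonoidAlgebra F G5) : ∃ z, aelt F * y = z * aelt F := by
  induction y using MonoidAlgebra.induction_on with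
  | of g =>
    obtain ⟨c, x⟩ := g
    cases x with
    | r i =>
      refine ⟨of F G5 (c, .r i), ?_⟩
      have h : ((1 : Multiplicative (ZMod 3)), DihedralGroup.r (1 : ZMod 5)) * (c, .r i)
          = ((c, .r i) : G5) * (1, .r 1) := by
        simp [Prod.ext_iff, DihedralGroup.r_mul_r, add_comm, mul_comm]
      simp only [aelt, sub_mul, mul_sub, one_mul, mul_one, ← map_mul, h]
    | sr i =>
      refine ⟨-of F G5 (c, .sr (i - 1)), ?_⟩
      have h1 : ((1 : Multiplicative (ZMod 3)), DihedralGroup.r (1 : ZMod 5)) * (c, .sr i)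
          = ((c, .sr (i - 1)) : G5) := by
        simp [Prod.ext_iff, DihedralGroup.r_mul_sr]
      have h2 : ((c, DihedralGroup.sr (i - 1)) : G5) * (1, .r 1) = (c, .sr i) := by
        simp [Prod.ext_iff, DihedralGroup.sr_mul_r]
      simp only [aelt, sub_mul, mul_sub, one_mul, mul_one, ← map_mul, h1, h2, neg_mul,
        neg_sub]
      abel
  | add f g hf hg =>
    obtain ⟨z1, h1⟩ := hf; obtain ⟨z2, h2⟩ := hg
    exact ⟨z1 + z2, by rw [mul_add, h1, h2, add_mul]⟩
  | smul r f hf =>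
    obtain ⟨z, h⟩ := hf
    exact ⟨r • z, by rw [mul_smul_comm, h, smul_mul_assoc]⟩

lemma mul_aelt_pow (c : MonoidAlgebra F G5) (n : ℕ) :
    ∃ z, (c * aelt F) ^ (n + 1) = z * (aelt F) ^ (n + 1) := by
  induction n with
  | zero => exact ⟨c, by simp⟩
  | succ n ih =>
    obtain ⟨z, hz⟩ := ih
    obtain ⟨w, hw⟩ := aelt_mul F z
    refine ⟨c * w, ?_⟩
    calc (c * aelt F) ^ (n + 1 + 1) = (c * aelt F) * (c * aelt F) ^ (n + 1) := pow_succ' _ _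
      _ = (c * aelt F) * (z * aelt F ^ (n + 1)) := by rw [hz]
      _ = c * (aelt F * z) * aelt F ^ (n + 1) := by simp only [mul_assoc]
      _ = c * (w * aelt F) * aelt F ^ (n + 1) := by rw [hw]
      _ = (c * w) * aelt F ^ (n + 1 + 1) := by
          rw [pow_succ' (aelt F) (n + 1)]; simp only [mul_assoc]

lemma charPA [CharP F 5] : CharP (MonoidAlgebra F G5) 5 :=
  charP_of_injective_ringHom (algebraMap F (MonoidAlgebra F G5)).injective 5

lemma aelt_pow5 [CharP F 5] : (aelt F) ^ 5 = 0 := by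
  haveI : CharP (MonoidAlgebra F G5) 5 := charPA F
  haveI : Fact (Nat.Prime 5) := ⟨by norm_num⟩
  have h5 : (of F G5 ((1 : Multiplicative (ZMod 3)), DihedralGroup.r 1)) ^ 5 = 1 := by
    have hr : (DihedralGroup.r (1 : ZMod 5)) ^ 5 = 1 := DihedralGroup.r_one_pow_n
    have hg : (((1 : Multiplicative (ZMod 3)), DihedralGroup.r (1 : ZMod 5)) : G5) ^ 5 = (1 : G5) := by
      rw [Prod.pow_mk, one_pow, hr]
      rfl
    rw [← map_pow, hg, map_one]
  have := sub_pow_char_of_commute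
    (x := of F G5 ((1 : Multiplicative (ZMod 3)), DihedralGroup.r 1)) (y := (1 : MonoidAlgebra F G5))
    5 (Commute.one_right _)
  rw [aelt, this, h5, one_pow, sub_self]

lemma pow5_eq_zero_of_mem [CharP F 5] {x : MonoidAlgebra F G5} (hx : x ∈ Ia F) :
    x ^ 5 = 0 := by
  obtain ⟨c, hc⟩ := Submodule.mem_span_singleton.mp hx
  obtain ⟨z, hz⟩ := mul_aelt_pow F c 4
  rw [← hc, smul_eq_mul]
  norm_num at hz
  rw [hz, aelt_pow5, mul_zero]

lemma Ia_le_jacobson [CharP F 5] :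
    Ia F ≤ Ideal.jacobson (⊥ : Ideal (MonoidAlgebra F G5)) := by
  rw [Ideal.jacobson]
  refine le_sInf fun M hM => ?_
  rw [Ia, Ideal.span_le, Set.singleton_subset_iff]
  by_contra ha
  have hlt : M < M ⊔ Ideal.span {aelt F} :=
    left_lt_sup.mpr fun hle => ha (hle (aelt_mem_Ia F))
  have htop : M ⊔ Ideal.span {aelt F} = ⊤ :=
    (Ideal.isMaximal_def.mp hM.2).2 _ hlt
  have h1 : (1 : MonoidAlgebra F G5) ∈ M ⊔ Ideal.span {aelt F} := htop ▸ Submodule.mem_top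
  obtain ⟨m, hm, y, hy, hmy⟩ := Submodule.mem_sup.mp h1
  have hy5 : y ^ 5 = 0 := pow5_eq_zero_of_mem F hy
  have hunit : IsUnit m := by
    have : m = 1 - y := by rw [← hmy]; abel
    rw [this]
    exact IsNilpotent.isUnit_one_sub ⟨5, hy5⟩
  exact (Ideal.isMaximal_def.mp hM.2).1 (M.eq_top_of_isUnit_mem hm hunit)


noncomputable def phi : MonoidAlgebra F G5 →ₐ[F] MonoidAlgebra F Q6 :=
  mapDomainAlgHom F F qhom

lemma phi_of (g : G5) : phi F (of F G5 g) = of F Q6 (qhom g) := by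
  simp [phi]

lemma phi_surj : Function.Surjective (phi F) := by
  intro y
  induction y using MonoidAlgebra.induction_on with
  | of b => exact ⟨of F G5 (sec b), by rw [phi_of, qhom_sec]⟩
  | add f g hf hg =>
    obtain ⟨x, rfl⟩ := hf; obtain ⟨y, rfl⟩ := hg; exact ⟨x + y, map_add _ _ _⟩
  | smul r f hf =>
    obtain ⟨x, rfl⟩ := hf; exact ⟨r • x, map_smul _ _ _⟩

lemma of_r_sub_one_mem (n : ℕ) :
    of F G5 ((1 : Multiplicative (ZMod 3)), DihedralGroup.r (n : ZMod 5)) - 1 ∈ Ia F := by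
  induction n with
  | zero =>
    have : of F G5 ((1 : Multiplicative (ZMod 3)), DihedralGroup.r ((0 : ℕ) : ZMod 5)) = 1 := by
      rw [show (((1 : Multiplicative (ZMod 3)), DihedralGroup.r ((0 : ℕ) : ZMod 5)) : G5) = 1 from rfl,
        map_one]
    rw [this, sub_self]
    exact zero_mem _
  | succ n ih =>
    have hmul : (((1 : Multiplicative (ZMod 3)), DihedralGroup.r (n : ZMod 5)) : G5) *
        (1, DihedralGroup.r 1) = (1, DihedralGroup.r ((n + 1 : ℕ) : ZMod 5)) := by
      simp [Prod.ext_iff, DihedralGroup.r_mul_r]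
    have key : of F G5 ((1 : Multiplicative (ZMod 3)), DihedralGroup.r ((n + 1 : ℕ) : ZMod 5)) - 1
        = of F G5 ((1 : Multiplicative (ZMod 3)), DihedralGroup.r (n : ZMod 5)) * aelt F
          + (of F G5 ((1 : Multiplicative (ZMod 3)), DihedralGroup.r (n : ZMod 5)) - 1) := by
      rw [aelt, mul_sub, mul_one, ← map_mul, hmul]
      abel
    rw [key]
    exact add_mem (Ideal.mul_mem_left _ _ (aelt_mem_Ia F)) ih

lemma of_mul_r_sub_mem (g : G5) (i : ZMod 5) :
    of F G5 (g * (1, DihedralGroup.r i)) - of F G5 g ∈ Ia F := by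
  have h1 : of F G5 ((1 : Multiplicative (ZMod 3)), DihedralGroup.r i) - 1 ∈ Ia F := by
    have := of_r_sub_one_mem F i.val
    rwa [ZMod.natCast_rightInverse i] at this
  have h2 : of F G5 (g * (1, DihedralGroup.r i)) - of F G5 g
      = of F G5 g * (of F G5 ((1 : Multiplicative (ZMod 3)), DihedralGroup.r i) - 1) := by
    rw [mul_sub, mul_one, ← map_mul]
  rw [h2]
  exact Ideal.mul_mem_left _ _ h1

lemma of_sub_of_sec_mem (g : G5) :
    of F G5 g - of F G5 (sec (qhom g)) ∈ Ia F := by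
  obtain ⟨c, x⟩ := g
  cases x with
  | r i =>
    have hs : sec (qhom (c, DihedralGroup.r i)) = (c, DihedralGroup.r 0) := by
      simp [sec, qhom, dsgn]; rfl
    have hg : ((c, DihedralGroup.r i) : G5) = ((c, DihedralGroup.r 0) : G5) * (1, .r i) := by
      simp [Prod.ext_iff, DihedralGroup.r_mul_r]
    rw [hs, hg]
    exact of_mul_r_sub_mem F _ _
  | sr i =>
    have hs : sec (qhom (c, DihedralGroup.sr i)) = (c, DihedralGroup.sr 0) := by
      simp [sec, qhom, dsgn]; rfl
    have hg : ((c, DihedralGroup.sr i) : G5) = ((c, DihedralGroup.sr 0) : G5) * (1, .r i) := by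
      simp [Prod.ext_iff, DihedralGroup.sr_mul_r]
    rw [hs, hg]
    exact of_mul_r_sub_mem F _ _

noncomputable def IaR : Submodule F (MonoidAlgebra F G5) :=
  Submodule.restrictScalars F (Ia F)

lemma ker_le_Ia : RingHom.ker (phi F).toRingHom ≤ Ia F := by
  classical
  set t : MonoidAlgebra F Q6 →ₗ[F] (MonoidAlgebra F G5 ⧸ IaR F) :=
    Finsupp.linearCombination F (fun b : Q6 => (IaR F).mkQ (of F G5 (sec b))) ∘ₗ
      (MonoidAlgebra.coeffLinearEquiv F).toLinearMap with ht_def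
  have ht : ∀ x, t (phi F x) = (IaR F).mkQ x := by
    intro x
    induction x using MonoidAlgebra.induction_on with
    | of g =>
      rw [phi_of]
      rw [ht_def]
      simp only [LinearMap.coe_comp, Function.comp_apply, LinearEquiv.coe_coe]
      erw [Finsupp.linearCombination_single]
      rw [one_smul, Submodule.mkQ_apply, Submodule.mkQ_apply, Submodule.Quotient.eq]
      have := neg_mem (of_sub_of_sec_mem F g)
      rw [neg_sub] at this
      exact this
    | add f g hf hg => rw [map_add, map_add, hf, hg, map_add]
    | smul r f hf => rw [map_smul, map_smul, hf, map_smul]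
  intro x hx
  have h0 : (IaR F).mkQ x = 0 := by
    rw [← ht, show (phi F) x = 0 from hx, map_zero]
  exact (Submodule.Quotient.mk_eq_zero _).mp h0

theorem jacobson_bot_of_isSemisimpleRing (R : Type*) [Ring R] [IsSemisimpleRing R] :
    Ideal.jacobson (⊥ : Ideal R) = ⊥ := by
  by_contra h
  obtain ⟨C, hC⟩ := ComplementedLattice.exists_isCompl (Ideal.jacobson (⊥ : Ideal R))
  have hCtop : C ≠ ⊤ := by
    intro h'
    apply h
    have h2 := hC.inf_eq_bot
    rwa [h', inf_top_eq] at h2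
  obtain ⟨M, hM, hCM⟩ := (IsCoatomic.eq_top_or_exists_le_coatom C).resolve_left hCtop
  have hMmax : M.IsMaximal := Ideal.isMaximal_def.mpr hM
  have hJM : Ideal.jacobson (⊥ : Ideal R) ≤ M := by
    rw [Ideal.jacobson]
    exact sInf_le ⟨bot_le, hMmax⟩
  have htop : (⊤ : Ideal R) ≤ M := by
    rw [← hC.sup_eq_top]
    exact sup_le hJM hCM
  exact hM.1 (top_le_iff.mp htop)

lemma semisimpleB [CharP F 5] : IsSemisimpleRing (MonoidAlgebra F Q6) := by
  haveI : NeZero ((Nat.card Q6 : F)) := by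
    have hc : Nat.card Q6 = 6 := by rw [Nat.card_eq_fintype_card]; simp [Q6]
    have h5 : (5 : F) = 0 := by exact_mod_cast CharP.cast_eq_zero F 5
    have h6 : ((Nat.card Q6 : ℕ) : F) = 1 := by
      rw [hc]
      have : ((6 : ℕ) : F) = 5 + 1 := by norm_num
      rw [this, h5, zero_add]
    exact ⟨by rw [h6]; exact one_ne_zero⟩
  infer_instance

lemma jacobson_le_ker [CharP F 5] :
    Ideal.jacobson (⊥ : Ideal (MonoidAlgebra F G5)) ≤ RingHom.ker (phi F).toRingHom := by
  haveI := semisimpleB F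
  intro x hx
  rw [RingHom.mem_ker]
  have hmem : (phi F).toRingHom x ∈ Ideal.jacobson (⊥ : Ideal (MonoidAlgebra F Q6)) := by
    rw [Ideal.jacobson]
    refine Submodule.mem_sInf.mpr fun M hMs => ?_
    haveI := hMs.2
    have hcm := Ideal.comap_isMaximal_of_surjective (phi F).toRingHom (phi_surj F)
      (K := M)
    rw [Ideal.jacobson] at hx
    exact Submodule.mem_sInf.mp hx _ ⟨bot_le, hcm⟩
  rwa [jacobson_bot_of_isSemisimpleRing, Submodule.mem_bot] at hmem

theorem jacobson_eq_Ia [CharP F 5] :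
    Ideal.jacobson (⊥ : Ideal (MonoidAlgebra F G5)) = Ia F :=
  le_antisymm ((jacobson_le_ker F).trans (ker_le_Ia F)) (Ia_le_jacobson F)

noncomputable def basisA : Module.Basis G5 F (MonoidAlgebra F G5) :=
  MonoidAlgebra.basis G5 F
noncomputable def basisB : Module.Basis Q6 F (MonoidAlgebra F Q6) :=
  MonoidAlgebra.basis Q6 F

lemma finrankA : Module.finrank F (MonoidAlgebra F G5) = 30 := by
  rw [Module.finrank_eq_card_basis (basisA F)]
  rw [Fintype.card_prod, DihedralGroup.card]
  simp

lemma finrankB : Module.finrank F (MonoidAlgebra F Q6) = 6 := by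
  rw [Module.finrank_eq_card_basis (basisB F)]
  rw [Fintype.card_prod]
  simp

lemma finrank_ker [CharP F 5] :
    Module.finrank F (LinearMap.ker (phi F).toLinearMap) = 24 := by
  haveI : Module.Finite F (MonoidAlgebra F G5) := Module.Finite.of_basis (basisA F)
  have h := LinearMap.finrank_range_add_finrank_ker (phi F).toLinearMap
  have hr : LinearMap.range (phi F).toLinearMap = ⊤ := by
    rw [LinearMap.range_eq_top]
    exact phi_surj F
  rw [hr, finrank_top, finrankB F, finrankA F] at h
  omega

end Stmt11


/-- For `F` a finite field with `5^k` elements and `G = C₃ × D₁₀`, the group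
`V = 1 + J(FG)` has order `5^(24k)` and exponent 5 (every element satisfies `v⁵ = 1`). -/
theorem stmt_11 (F : Type) [Field F] [Fintype F] (k : ℕ) (hk : 0 < k)
    (hchar : CharP F 5) (hcard : Fintype.card F = 5 ^ k) :
    let G := Multiplicative (ZMod 3) × DihedralGroup 5
    ∃ H : Subgroup (MonoidAlgebra F G)ˣ,
      (∀ u : (MonoidAlgebra F G)ˣ,
        u ∈ H ↔ (u : MonoidAlgebra F G) - 1 ∈ Ideal.jacobson (⊥ : Ideal (MonoidAlgebra F G))) ∧
      Nat.card H = 5 ^ (24 * k) ∧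
      ∀ v ∈ H, v ^ 5 = 1 := by
  intro G
  classical
  haveI := hchar
  haveI : Fact (Nat.Prime 5) := ⟨by norm_num⟩
  haveI : CharP (MonoidAlgebra F Stmt11.G5) 5 := Stmt11.charPA F
  let A := MonoidAlgebra F Stmt11.G5
  let J : Ideal A := Ideal.jacobson ⊥
  have hJI : J = Stmt11.Ia F := Stmt11.jacobson_eq_Ia F
  let H : Subgroup Aˣ :=
    { carrier := {u : Aˣ | (u : A) - 1 ∈ J}
      mul_mem' := by
        intro a b ha hb
        simp only [Set.mem_setOf_eq] at *
        have key : ((a * b : Aˣ) : A) - 1 = (a : A) * ((b : A) - 1) + ((a : A) - 1) := by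
          rw [Units.val_mul, mul_sub, mul_one]; abel
        rw [key]
        exact add_mem (Ideal.mul_mem_left _ _ hb) ha
      one_mem' := by
        simp only [Set.mem_setOf_eq, Units.val_one, sub_self]
        exact zero_mem _
      inv_mem' := by
        intro u hu
        simp only [Set.mem_setOf_eq] at *
        have key : ((u⁻¹ : Aˣ) : A) - 1 = -(((u⁻¹ : Aˣ) : A) * ((u : A) - 1)) := by
          rw [mul_sub, Units.inv_mul, mul_one, neg_sub]
        rw [key]
        exact neg_mem (Ideal.mul_mem_left _ _ hu) }
  refine ⟨H, fun u => Iff.rfl, ?_, ?_⟩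
  · -- cardinality
    let K : Submodule F A := LinearMap.ker (Stmt11.phi F).toLinearMap
    have hmemK : ∀ x : A, x ∈ J ↔ x ∈ K := by
      intro x
      constructor
      · intro hx
        have h1 := Stmt11.jacobson_le_ker F hx
        rw [RingHom.mem_ker] at h1
        have h2 : (Stmt11.phi F).toLinearMap x = 0 := h1
        exact LinearMap.mem_ker.mpr h2
      · intro hx
        apply Stmt11.Ia_le_jacobson F
        apply Stmt11.ker_le_Ia F
        rw [RingHom.mem_ker]
        have h2 : (Stmt11.phi F).toLinearMap x = 0 := LinearMap.mem_ker.mp hx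
        exact h2
    let f : H → K := fun u => ⟨((u : Aˣ) : A) - 1, (hmemK _).mp u.2⟩
    have hbij : Function.Bijective f := by
      constructor
      · intro u v huv
        apply Subtype.ext; apply Units.ext
        have h1 := congrArg Subtype.val huv
        exact sub_left_injective (b := (1 : A)) h1
      · rintro ⟨x, hxK⟩
        have hxJ : x ∈ J := (hmemK x).mpr hxK
        have hx5 : x ^ 5 = 0 := Stmt11.pow5_eq_zero_of_mem F (by rw [← hJI]; exact hxJ)
        have hu : IsUnit ((1 : A) + x) := IsNilpotent.isUnit_one_add ⟨5, hx5⟩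
        obtain ⟨w, hw⟩ := hu
        have hwH : w ∈ H := by
          show (w : A) - 1 ∈ J
          rw [hw]
          simpa using hxJ
        refine ⟨⟨w, hwH⟩, ?_⟩
        apply Subtype.ext
        show (w : A) - 1 = x
        rw [hw]
        exact add_sub_cancel_left 1 x
    rw [Nat.card_congr (Equiv.ofBijective f hbij)]
    haveI : Module.Finite F A := Module.Finite.of_basis (Stmt11.basisA F)
    haveI : Finite A := Module.finite_of_finite F
    haveI : Fintype K := Fintype.ofFinite K
    rw [Nat.card_eq_fintype_card, Module.card_eq_pow_finrank (K := F) (V := K), hcard,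
      Stmt11.finrank_ker F, ← pow_mul, Nat.mul_comm]
  · -- exponent 5
    intro v hv
    have hx : ((v : Aˣ) : A) - 1 ∈ J := hv
    have hx5 : (((v : Aˣ) : A) - 1) ^ 5 = 0 :=
      Stmt11.pow5_eq_zero_of_mem F (by rw [← hJI]; exact hx)
    apply Units.ext
    rw [Units.val_pow_eq_pow_val, Units.val_one]
    have hv1 : ((v : Aˣ) : A) = 1 + (((v : Aˣ) : A) - 1) := by abel
    rw [hv1, add_pow_char_of_commute 5 (Commute.one_left _), one_pow, hx5, add_zero]
end

section
/- Let F be a finite field of characteristic 5 and G = C_3 × D_10. Then J(FG)⁵ = 0. -/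
set_option linter.unusedSectionVars false

namespace Stmt12Aux

abbrev G := Multiplicative (ZMod 3) × DihedralGroup 5
abbrev Q := Multiplicative (ZMod 3) × Multiplicative (ZMod 2)

def qhom : DihedralGroup 5 →* Multiplicative (ZMod 2) where
  toFun x := Multiplicative.ofAdd (match x with
    | DihedralGroup.r _ => 0
    | DihedralGroup.sr _ => 1)
  map_one' := by decide
  map_mul' := by decide

def p : G →* Q := (MonoidHom.id (Multiplicative (ZMod 3))).prodMap qhom

def sig : Q → G := fun y => (y.1, if y.2 = 1 then 1 else DihedralGroup.sr 0)

def g0 : G := (1, DihedralGroup.r 1)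

lemma F1 : ∀ g : G, ∃ k : Fin 5, g = sig (p g) * g0 ^ (k : ℕ) := by decide
lemma F2 : ∀ g : G, ∃ k : Fin 5, g0 * g = g * g0 ^ (k : ℕ) := by decide
lemma F3 : ∀ y : Q, p (sig y) = y := by decide
lemma F4 : g0 ^ 5 = 1 := by decide
lemma F5 : Fintype.card Q = 6 := by decide

/-- In a semisimple ring the Jacobson radical is trivial. -/
lemma jac_bot (R : Type*) [Ring R] [IsSemisimpleRing R] :
    Ideal.jacobson (⊥ : Ideal R) = ⊥ := by
  rw [eq_bot_iff]
  intro x hx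
  rw [Submodule.mem_bot]
  by_contra hx0
  obtain ⟨q, hq⟩ := exists_isCompl (Submodule.span R {x})
  rcases eq_top_or_exists_le_coatom q with htop | ⟨m, hm, hqm⟩
  · rw [htop] at hq
    have hb : Submodule.span R {x} = ⊥ := disjoint_top.mp hq.disjoint
    have : x ∈ (⊥ : Submodule R R) := hb ▸ Submodule.mem_span_singleton_self x
    exact hx0 (Submodule.mem_bot R |>.mp this)
  · have hmax : Ideal.IsMaximal (show Ideal R from m) := Ideal.isMaximal_def.mpr hm
    have hxm : x ∈ m := by
      rw [Ideal.jacobson] at hx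
      exact Submodule.mem_sInf.mp hx m ⟨bot_le, hmax⟩
    have hsp : Submodule.span R {x} ≤ m := by
      rw [Submodule.span_le]
      simpa using hxm
    have htop2 : (⊤ : Submodule R R) ≤ m := by
      rw [← hq.sup_eq_top]
      exact sup_le hsp hqm
    exact hm.1 (top_le_iff.mp htop2)

/-- Surjective ring homomorphisms map the Jacobson radical into the Jacobson radical. -/
lemma jac_map {R S : Type*} [Ring R] [Ring S] (f : R →+* S) (hf : Function.Surjective f)
    {x : R} (hx : x ∈ Ideal.jacobson (⊥ : Ideal R)) :
    f x ∈ Ideal.jacobson (⊥ : Ideal S) := by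
  rw [Ideal.jacobson] at hx ⊢
  refine Submodule.mem_sInf.mpr ?_
  rintro I ⟨-, hI⟩
  have hmax : (Ideal.comap f I).IsMaximal := Ideal.comap_isMaximal_of_surjective f hf
  exact Submodule.mem_sInf.mp hx (Ideal.comap f I) ⟨bot_le, hmax⟩

section Field

variable (F : Type) [Field F]

noncomputable def s : MonoidAlgebra F G := MonoidAlgebra.single g0 1 - 1

noncomputable def M : Submodule (MonoidAlgebra F G) (MonoidAlgebra F G) :=
  Submodule.span (MonoidAlgebra F G) {s F}

lemma s_mem : s F ∈ M F := Submodule.mem_span_singleton_self _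

lemma lemB : ∀ k : ℕ, (MonoidAlgebra.single (g0 ^ k) 1 - 1 : MonoidAlgebra F G) ∈ M F := by
  intro k
  induction k with
  | zero => rw [pow_zero, ← MonoidAlgebra.one_def, sub_self]; exact (M F).zero_mem
  | succ k ih =>
    have key : (MonoidAlgebra.single (g0 ^ (k+1)) 1 - 1 : MonoidAlgebra F G)
        = MonoidAlgebra.single (g0 ^ k) 1 * (MonoidAlgebra.single g0 1 - 1)
          + (MonoidAlgebra.single (g0 ^ k) 1 - 1) := by
      simp only [mul_sub, mul_one, one_mul, MonoidAlgebra.single_mul_single, ← pow_succ]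
      abel
    rw [key, show (MonoidAlgebra.single g0 1 - 1 : MonoidAlgebra F G) = s F from rfl]
    exact add_mem ((M F).smul_mem _ (s_mem F)) ih

lemma lemC : ∀ x : MonoidAlgebra F G, s F * x ∈ M F := by
  intro x
  induction x using MonoidAlgebra.induction_on with
  | of g =>
    obtain ⟨k, hk⟩ := F2 g
    have key : s F * MonoidAlgebra.of F G g
        = MonoidAlgebra.single g 1 * (MonoidAlgebra.single (g0 ^ (k : ℕ)) 1 - 1) := by
      simp only [MonoidAlgebra.of_apply, s, sub_mul, mul_sub, one_mul, mul_one,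
        MonoidAlgebra.single_mul_single, hk]
    rw [key]
    exact (M F).smul_mem _ (lemB F _)
  | add f g hf hg =>
    rw [mul_add]
    exact add_mem hf hg
  | smul r f hf =>
    rw [mul_smul_comm]
    exact (M F).smul_of_tower_mem r hf

noncomputable def pi : MonoidAlgebra F G →ₐ[F] MonoidAlgebra F Q :=
  MonoidAlgebra.mapDomainAlgHom F F p

noncomputable def tau : MonoidAlgebra F Q →ₗ[F] MonoidAlgebra F G :=
  MonoidAlgebra.mapDomainLinearMap F F sig

lemma pi_single (g : G) (c : F) :
    pi F (MonoidAlgebra.single g c) = MonoidAlgebra.single (p g) c := by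
  simp [pi, MonoidAlgebra.mapDomainAlgHom, MonoidAlgebra.mapDomainRingHom,
    Finsupp.mapDomain_single]

lemma tau_single (g : Q) (c : F) :
    tau F (MonoidAlgebra.single g c) = MonoidAlgebra.single (sig g) c := by
  rw [tau, MonoidAlgebra.mapDomainLinearMap_single]

lemma lemA : ∀ x : MonoidAlgebra F G, x - tau F (pi F x) ∈ M F := by
  intro x
  induction x using MonoidAlgebra.induction_on with
  | of g =>
    obtain ⟨k, hk⟩ := F1 g
    have h1 : tau F (pi F (MonoidAlgebra.of F G g)) = MonoidAlgebra.single (sig (p g)) 1 := by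
      rw [MonoidAlgebra.of_apply, pi_single, tau_single]
    rw [h1]
    have key : ((MonoidAlgebra.of F G g : MonoidAlgebra F G)
          - MonoidAlgebra.single (sig (p g)) 1 : MonoidAlgebra F G)
        = MonoidAlgebra.single (sig (p g)) 1
            * (MonoidAlgebra.single (g0 ^ (k : ℕ)) 1 - 1) := by
      simp only [MonoidAlgebra.of_apply, mul_sub, mul_one, one_mul,
        MonoidAlgebra.single_mul_single, ← hk]
    rw [key]
    exact (M F).smul_mem _ (lemB F _)
  | add f g hf hg =>
    rw [map_add, map_add]
    have : f + g - (tau F (pi F f) + tau F (pi F g))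
        = (f - tau F (pi F f)) + (g - tau F (pi F g)) := by abel
    rw [this]
    exact add_mem hf hg
  | smul r f hf =>
    rw [map_smul, map_smul, ← smul_sub]
    exact (M F).smul_of_tower_mem r hf

lemma lemK (x : MonoidAlgebra F G) (hx : pi F x = 0) : x ∈ M F := by
  have h := lemA F x
  rwa [hx, map_zero, sub_zero] at h

lemma pi_surj : Function.Surjective (pi F) := by
  intro y
  induction y using MonoidAlgebra.induction_on with
  | of g =>
    exact ⟨MonoidAlgebra.single (sig g) 1, by rw [pi_single, F3]; rfl⟩
  | add f g hf hg =>
    obtain ⟨x1, h1⟩ := hf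
    obtain ⟨x2, h2⟩ := hg
    exact ⟨x1 + x2, by rw [map_add, h1, h2]⟩
  | smul r f hf =>
    obtain ⟨x, h⟩ := hf
    exact ⟨r • x, by rw [map_smul, h]⟩

end Field

end Stmt12Aux

namespace Stmt12Aux

section Main

variable (F : Type) [Field F] [CharP F 5]

lemma s_pow_five : (s F) ^ 5 = 0 := by
  haveI : Fact (Nat.Prime 5) := ⟨by norm_num⟩
  haveI : CharP (MonoidAlgebra F G) 5 :=
    charP_of_injective_ringHom (algebraMap F (MonoidAlgebra F G)).injective 5
  have h1 : (MonoidAlgebra.single g0 (1:F) : MonoidAlgebra F G) ^ 5 = 1 := by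
    rw [MonoidAlgebra.single_pow, one_pow, F4, ← MonoidAlgebra.one_def]
  calc (s F) ^ 5 = (MonoidAlgebra.single g0 (1:F) - 1) ^ 5 := rfl
    _ = (MonoidAlgebra.single g0 (1:F) : MonoidAlgebra F G) ^ 5 - 1 ^ 5 :=
        sub_pow_char_of_commute _ (Commute.one_right _)
    _ = 0 := by rw [h1, one_pow, sub_self]

lemma cpow : ∀ (m : ℕ) (x : MonoidAlgebra F G), ∃ w, (s F) ^ m * x = w * (s F) ^ m := by
  intro m
  induction m with
  | zero => exact fun x => ⟨x, by simp⟩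
  | succ m ih =>
    intro x
    obtain ⟨v, hv⟩ := Submodule.mem_span_singleton.mp (lemC F x)
    obtain ⟨u, hu⟩ := ih v
    refine ⟨u, ?_⟩
    have hv' : s F * x = v * s F := by rw [← hv]; rfl
    calc (s F) ^ (m+1) * x = (s F) ^ m * (s F * x) := by rw [pow_succ, mul_assoc]
      _ = (s F) ^ m * (v * s F) := by rw [hv']
      _ = ((s F) ^ m * v) * s F := by rw [mul_assoc]
      _ = (u * (s F) ^ m) * s F := by rw [hu]
      _ = u * (s F) ^ (m+1) := by rw [pow_succ, ← mul_assoc]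

lemma step (m : ℕ) (x y w : MonoidAlgebra F G) (hx : x = w * (s F) ^ m) (hy : y ∈ M F) :
    ∃ w', x * y = w' * (s F) ^ (m + 1) := by
  obtain ⟨y1, hy1⟩ := Submodule.mem_span_singleton.mp hy
  have hy1' : y = y1 * s F := by rw [← hy1]; rfl
  obtain ⟨u, hu⟩ := cpow F m y1
  refine ⟨w * u, ?_⟩
  calc x * y = w * ((s F) ^ m * y1) * s F := by rw [hx, hy1']; simp only [mul_assoc]
    _ = w * (u * (s F) ^ m) * s F := by rw [hu]
    _ = (w * u) * (s F) ^ (m+1) := by rw [pow_succ]; simp only [mul_assoc]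

end Main

end Stmt12Aux

open Stmt12Aux in
/-- For `F` a finite field of characteristic 5 and `G = C₃ × D₁₀`, the fifth power of the
Jacobson radical of `FG` is zero: any product of five elements of `J(FG)` vanishes. -/
theorem stmt_12 (F : Type) [Field F] [Fintype F] (hchar : CharP F 5) :
    let G := Multiplicative (ZMod 3) × DihedralGroup 5
    ∀ a b c d e : MonoidAlgebra F G,
      a ∈ Ideal.jacobson (⊥ : Ideal (MonoidAlgebra F G)) →
      b ∈ Ideal.jacobson (⊥ : Ideal (MonoidAlgebra F G)) →
      c ∈ Ideal.jacobson (⊥ : Ideal (MonoidAlgebra F G)) →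
      d ∈ Ideal.jacobson (⊥ : Ideal (MonoidAlgebra F G)) →
      e ∈ Ideal.jacobson (⊥ : Ideal (MonoidAlgebra F G)) →
      a * b * c * d * e = 0 := by
  haveI := hchar
  intro G' a b c d e ha hb hc hd he
  haveI : NeZero ((Fintype.card Q : F)) := by
    refine ⟨fun h => ?_⟩
    rw [F5] at h
    exact (by norm_num : ¬ (5 ∣ 6)) ((CharP.cast_eq_zero_iff F 5 6).mp h)
  haveI : IsSemisimpleRing (MonoidAlgebra F Q) := by
    haveI : NeZero (Nat.card Q : F) := by rwa [Nat.card_eq_fintype_card]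
    infer_instance
  have hjac : Ideal.jacobson (⊥ : Ideal (MonoidAlgebra F Q)) = ⊥ := jac_bot _
  -- each element lies in M F
  have key : ∀ x : MonoidAlgebra F Stmt12Aux.G,
      x ∈ Ideal.jacobson (⊥ : Ideal (MonoidAlgebra F Stmt12Aux.G)) → x ∈ M F := by
    intro x hx
    have h1 := jac_map (pi F).toRingHom (pi_surj F) hx
    rw [hjac, Submodule.mem_bot] at h1
    exact lemK F x h1
  have ha' := key a ha
  have hb' := key b hb
  have hc' := key c hc
  have hd' := key d hd
  have he' := key e he
  obtain ⟨a1, ha1⟩ := Submodule.mem_span_singleton.mp ha'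
  have ha1' : a = a1 * (s F) ^ 1 := by rw [pow_one, ← ha1]; rfl
  obtain ⟨w2, hw2⟩ := step F 1 a b a1 ha1' hb'
  obtain ⟨w3, hw3⟩ := step F 2 (a * b) c w2 hw2 hc'
  obtain ⟨w4, hw4⟩ := step F 3 (a * b * c) d w3 hw3 hd'
  obtain ⟨w5, hw5⟩ := step F 4 (a * b * c * d) e w4 hw4 he'
  rw [hw5, (by norm_num : 4 + 1 = 5), s_pow_five F, mul_zero]
end

section
/- Let F be a finite field of characteristic 5 with |F| = q = 5^k where q ≡ 1 (mod 6), and G = C_3 × D_10. Then U(FG) ≅ V ⋊ C_{5^k−1}⁶ where V = 1 + J(FG). -/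
/-- Units of a product of monoids. -/
@[simps]
def myPiUnits {ι : Type*} {M : ι → Type*} [∀ i, Monoid (M i)] :
    (∀ i, M i)ˣ ≃* ∀ i, (M i)ˣ where
  toFun u i := ⟨u.val i, u.inv i, congrFun u.val_inv i, congrFun u.inv_val i⟩
  invFun f := ⟨fun i => (f i : M i), fun i => ((f i)⁻¹ : (M i)ˣ),
    funext fun i => Units.mul_inv _, funext fun i => Units.inv_mul _⟩
  left_inv u := Units.ext rfl
  right_inv f := funext fun i => Units.ext rfl
  map_mul' u v := funext fun i => Units.ext rfl

/-- Reindexing a Pi type by an equivalence, as a `MulEquiv`. -/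
def myPiCongrLeft {ι ι' : Type*} (M : Type*) [Monoid M] (e : ι ≃ ι') :
    (ι → M) ≃* (ι' → M) where
  toFun f := f ∘ e.symm
  invFun f := f ∘ e
  left_inv f := funext fun i => by simp
  right_inv f := funext fun i => by simp
  map_mul' f g := rfl

/-- A split surjection realizes the source as a semidirect product of kernel and image. -/
theorem mySplitting {Gp Q : Type*} [Group Gp] [Group Q] (P : Gp →* Q) (S : Q →* Gp)
    (hPS : ∀ q, P (S q) = q) :
    Nonempty (Gp ≃* P.ker ⋊[(MulAut.conjNormal (H := P.ker)).comp S] Q) := by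
  set φ := (MulAut.conjNormal (H := P.ker)).comp S with hφ
  have hcomp : ∀ q, P.ker.subtype.comp (φ q).toMonoidHom
      = (MulAut.conj (S q)).toMonoidHom.comp P.ker.subtype := by
    intro q; ext n; simp [φ, MulAut.conjNormal_apply]
  let e : P.ker ⋊[φ] Q →* Gp := SemidirectProduct.lift P.ker.subtype S hcomp
  have he : ∀ x : P.ker ⋊[φ] Q, e x = (x.left : Gp) * S x.right := fun _ => rfl
  have hbij : Function.Bijective e := by
    constructor
    · intro x y hxy
      rw [he, he] at hxy
      have h2 : x.right = y.right := by
        have := congrArg P hxy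
        have hx : P (x.left : Gp) = 1 := x.left.2
        have hy : P (y.left : Gp) = 1 := y.left.2
        simpa [hx, hy, hPS] using this
      have h1 : (x.left : Gp) = y.left := by
        rw [h2] at hxy
        exact mul_right_cancel hxy
      exact SemidirectProduct.ext (Subtype.ext h1) h2
    · intro g
      refine ⟨⟨⟨g * (S (P g))⁻¹, ?_⟩, P g⟩, ?_⟩
      · simp [MonoidHom.mem_ker, hPS]
      · rw [he]; simp
  exact ⟨(MulEquiv.ofBijective e hbij).symm⟩

open MonoidAlgebra DihedralGroup

section chars

def zmc {M : Type*} [Monoid M] (n : ℕ) [NeZero n] (u : M) (hu : u ^ n = 1) :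
    Multiplicative (ZMod n) →* M where
  toFun x := u ^ (Multiplicative.toAdd x).val
  map_one' := by simp [ZMod.val_zero]
  map_mul' x y := by
    show u ^ (Multiplicative.toAdd x + Multiplicative.toAdd y).val = _
    rw [ZMod.val_add, ← pow_eq_pow_mod _ hu, pow_add]

def dsgn {M : Type*} [Monoid M] (u : M) (hu : u ^ 2 = 1) {n : ℕ} : DihedralGroup n →* M where
  toFun x := match x with
    | DihedralGroup.r _ => 1
    | DihedralGroup.sr _ => u
  map_one' := by rw [DihedralGroup.one_def]
  map_mul' x y := by
    rcases x with i | i <;> rcases y with j | j <;>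
      simp [DihedralGroup.r_mul_r, DihedralGroup.r_mul_sr, DihedralGroup.sr_mul_r,
        DihedralGroup.sr_mul_sr, ← sq, hu]

abbrev A3 := Multiplicative (ZMod 3)
abbrev M2 := Multiplicative (ZMod 2)
abbrev Dih := DihedralGroup 5
abbrev Gr := A3 × Dih
abbrev Tg := A3 × M2
abbrev J6 := ZMod 3 × ZMod 2

def db : M2 →* Dih := zmc 2 (DihedralGroup.sr 0) (by
  rw [sq, DihedralGroup.sr_mul_self])

def ιT : Tg →* Gr := (MonoidHom.id A3).prodMap db

variable {F : Type} [Field F] (ω : Fˣ) (hω : ω ^ 3 = 1)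

def χu (j : J6) : Gr →* Fˣ :=
  ((zmc 3 (ω ^ j.1.val) (by rw [← pow_mul, mul_comm, pow_mul, hω, one_pow])).comp
      (MonoidHom.fst A3 Dih)) *
  ((dsgn ((-1 : Fˣ) ^ j.2.val) (by rw [← pow_mul, mul_comm, pow_mul, neg_one_sq, one_pow])).comp
      (MonoidHom.snd A3 Dih))

lemma χu_apply (j : J6) (x : ZMod 3) (d : Dih) :
    χu ω hω j (Multiplicative.ofAdd x, d)
      = (ω ^ j.1.val) ^ x.val * (dsgn ((-1 : Fˣ) ^ j.2.val)
          (by rw [← pow_mul, mul_comm, pow_mul, neg_one_sq, one_pow]) d) := rfl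

lemma χu_rG (j : J6) : χu ω hω j ((1 : A3), DihedralGroup.r 1) = 1 := by
  have : ((1 : A3), DihedralGroup.r (1 : ZMod 5))
      = (Multiplicative.ofAdd (0 : ZMod 3), DihedralGroup.r 1) := rfl
  rw [this, χu_apply]
  simp [dsgn, ZMod.val_zero]

def ηu (j : J6) : Tg →* Fˣ := (χu ω hω j).comp ιT

lemma ηu_t1 (j : J6) :
    ηu ω hω j (Multiplicative.ofAdd (1 : ZMod 3), (1 : M2)) = ω ^ j.1.val := by
  show χu ω hω j (Multiplicative.ofAdd (1 : ZMod 3), db 1) = _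
  have h1 : db (1 : M2) = 1 := map_one db
  rw [h1]
  have h2 : (1 : Dih) = DihedralGroup.r 0 := DihedralGroup.one_def
  rw [h2, χu_apply]
  simp [ZMod.val_one, dsgn, -DihedralGroup.r_zero]

lemma ηu_t2 (j : J6) :
    ηu ω hω j ((1 : A3), Multiplicative.ofAdd (1 : ZMod 2)) = (-1 : Fˣ) ^ j.2.val := by
  show χu ω hω j ((1 : A3), db (Multiplicative.ofAdd (1 : ZMod 2))) = _
  have hdb : db (Multiplicative.ofAdd (1 : ZMod 2)) = DihedralGroup.sr 0 := by
    show (DihedralGroup.sr 0 : Dih) ^ (1 : ZMod 2).val = _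
    rw [ZMod.val_one, pow_one]
  rw [hdb]
  show χu ω hω j (Multiplicative.ofAdd (0 : ZMod 3), DihedralGroup.sr 0) = _
  rw [χu_apply]
  simp [ZMod.val_zero, dsgn]

lemma ηu_injective (hord : orderOf ω = 3) (hne : (-1 : Fˣ) ≠ 1) :
    Function.Injective (fun j : J6 => ηu ω hω j) := by
  have h2 : orderOf (-1 : Fˣ) = 2 := orderOf_eq_prime (by rw [sq, neg_mul_neg, one_mul]) hne
  intro j j' h
  have e1 : ω ^ j.1.val = ω ^ j'.1.val := by
    have := congrArg (fun f : Tg →* Fˣ => f (Multiplicative.ofAdd (1 : ZMod 3), (1 : M2))) h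
    simpa [ηu_t1] using this
  have e2 : (-1 : Fˣ) ^ j.2.val = (-1 : Fˣ) ^ j'.2.val := by
    have := congrArg (fun f : Tg →* Fˣ => f ((1 : A3), Multiplicative.ofAdd (1 : ZMod 2))) h
    simpa [ηu_t2] using this
  have m1 : j.1.val ≡ j'.1.val [MOD 3] := by
    have := pow_eq_pow_iff_modEq.mp e1; rwa [hord] at this
  have m2 : j.2.val ≡ j'.2.val [MOD 2] := by
    have := pow_eq_pow_iff_modEq.mp e2; rwa [h2] at this
  have hv1 : j.1.val = j'.1.val := by
    have := m1; unfold Nat.ModEq at this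
    rwa [Nat.mod_eq_of_lt (ZMod.val_lt _), Nat.mod_eq_of_lt (ZMod.val_lt _)] at this
  have hv2 : j.2.val = j'.2.val := by
    have := m2; unfold Nat.ModEq at this
    rwa [Nat.mod_eq_of_lt (ZMod.val_lt _), Nat.mod_eq_of_lt (ZMod.val_lt _)] at this
  exact Prod.ext (ZMod.val_injective _ hv1) (ZMod.val_injective _ hv2)

end chars

section algebra
open MonoidAlgebra
variable {F : Type} [Field F] (ω : Fˣ) (hω : ω ^ 3 = 1)

def pD : Dih →* M2 := dsgn (Multiplicative.ofAdd (1 : ZMod 2)) (by decide)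

def πG : Gr →* Tg := (MonoidHom.id A3).prodMap pD

def χPi : Gr →* (J6 → F) where
  toFun g j := ((χu ω hω j g : Fˣ) : F)
  map_one' := by funext j; simp
  map_mul' a b := by funext j; simp

noncomputable def ρA : MonoidAlgebra F Gr →ₐ[F] (J6 → F) :=
  MonoidAlgebra.lift F (J6 → F) Gr (χPi ω hω)

noncomputable def ψT : MonoidAlgebra F Tg →ₐ[F] MonoidAlgebra F Gr :=
  mapDomainAlgHom F F ιT

noncomputable def σG : MonoidAlgebra F Gr →ₐ[F] MonoidAlgebra F Tg :=
  mapDomainAlgHom F F πG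

noncomputable def τT : MonoidAlgebra F Tg →ₐ[F] (J6 → F) := (ρA ω hω).comp ψT

def vv : Tg → (J6 → F) := fun t j => ((ηu ω hω j t : Fˣ) : F)

lemma ρA_single (g : Gr) (c : F) : ρA ω hω (single g c) = c • χPi ω hω g :=
  MonoidAlgebra.lift_single _ _ _

lemma ψT_single (t : Tg) (c : F) : ψT (single t c) = single (ιT t) c := by
  show MonoidAlgebra.mapDomain ιT (single t c) = _
  exact MonoidAlgebra.mapDomain_single

lemma σG_single (g : Gr) (c : F) : σG (single g c) = single (πG g) c := by
  show MonoidAlgebra.mapDomain πG (single g c) = _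
  exact MonoidAlgebra.mapDomain_single

lemma τT_eq (f : MonoidAlgebra F Tg) :
    τT ω hω f = Finsupp.linearCombination F (vv ω hω) f.coeff := by
  induction f using MonoidAlgebra.induction_linear with
  | zero => simp [map_zero]
  | add f g hf hg => rw [map_add, MonoidAlgebra.coeff_add, map_add, hf, hg]
  | single t c =>
      rw [MonoidAlgebra.coeff_single, Finsupp.linearCombination_single]
      show ρA ω hω (ψT (single t c)) = c • vv ω hω t
      rw [ψT_single, ρA_single]
      rfl

lemma vv_li (hord : orderOf ω = 3) (hne : (-1 : Fˣ) ≠ 1) :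
    LinearIndependent F (vv ω hω) := by
  classical
  set eT : J6 ≃ Tg := Equiv.prodCongr Multiplicative.ofAdd Multiplicative.ofAdd with heT
  set A : Matrix J6 J6 F := Matrix.of fun j j' => ((ηu ω hω j (eT j') : Fˣ) : F) with hA
  have hinj : Function.Injective fun j : J6 => ((Units.coeHom F).comp (ηu ω hω j)) := by
    intro j j' h
    have h' : ((Units.coeHom F).comp (ηu ω hω j)) = ((Units.coeHom F).comp (ηu ω hω j')) := h
    apply ηu_injective ω hω hord hne
    show ηu ω hω j = ηu ω hω j'
    apply MonoidHom.ext
    intro t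
    exact Units.ext (DFunLike.congr_fun h' t)
  have hli0 : LinearIndependent F
      (fun j : J6 => ⇑((Units.coeHom F).comp (ηu ω hω j)) : J6 → (Tg → F)) :=
    (linearIndependent_monoidHom Tg F).comp _ hinj
  have hrows : LinearIndependent F (fun j : J6 => A j) := by
    have := hli0.map' (LinearEquiv.funCongrLeft F F eT).toLinearMap
      (LinearMap.ker_eq_bot_of_injective (LinearEquiv.funCongrLeft F F eT).injective)
    exact this
  have hU : IsUnit A := Matrix.linearIndependent_rows_iff_isUnit.mp hrows
  have hcols : LinearIndependent F (fun j' : J6 => A.transpose j') :=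
    Matrix.linearIndependent_cols_iff_isUnit.mpr hU
  have hcomp := hcols.comp (fun t : Tg => eT.symm t) (Equiv.injective _)
  exact hcomp

lemma τT_injective (hord : orderOf ω = 3) (hne : (-1 : Fˣ) ≠ 1) :
    Function.Injective (τT ω hω (F := F)) := by
  have hli := vv_li ω hω hord hne
  intro f g h
  have : τT ω hω (f - g) = 0 := by rw [map_sub, h, sub_self]
  rw [τT_eq] at this
  have := linearIndependent_iff.mp hli _ this
  exact sub_eq_zero.mp (MonoidAlgebra.coeff_eq_zero.mp this)

lemma τT_bijective (hord : orderOf ω = 3) (hne : (-1 : Fˣ) ≠ 1) :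
    Function.Bijective (τT ω hω (F := F)) := by
  have hinj := τT_injective ω hω hord hne
  refine ⟨hinj, ?_⟩
  have hfin : FiniteDimensional F (MonoidAlgebra F Tg) :=
    Module.Finite.of_basis (MonoidAlgebra.basis Tg F : Module.Basis Tg F (MonoidAlgebra F Tg))
  have h1 : Module.finrank F (MonoidAlgebra F Tg) = Fintype.card Tg :=
    Module.finrank_eq_card_basis (MonoidAlgebra.basis Tg F : Module.Basis Tg F (MonoidAlgebra F Tg))
  have h2 : Module.finrank F (J6 → F) = Fintype.card J6 := Module.finrank_pi F
  have heq : Module.finrank F (MonoidAlgebra F Tg) = Module.finrank F (J6 → F) := by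
    rw [h1, h2]
    exact Fintype.card_congr (Equiv.prodCongr Multiplicative.toAdd Multiplicative.toAdd)
  have := (LinearMap.injective_iff_surjective_of_finrank_eq_finrank
    (f := (τT ω hω).toLinearMap) heq)
  exact this.mp (fun a b hab => hinj hab)

end algebra

section radical
open MonoidAlgebra
variable (F : Type) [Field F]

def rG : Gr := ((1 : A3), DihedralGroup.r 1)
def rGi : Gr := ((1 : A3), DihedralGroup.r (-1))

noncomputable def δel : MonoidAlgebra F Gr := single (rG) (1 : F) - 1

noncomputable def Iδ : Ideal (MonoidAlgebra F Gr) := Ideal.span {δel F}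

lemma δel_mem : δel F ∈ Iδ F := Ideal.subset_span rfl

lemma rGi_mul_rG : rGi * rG = 1 := by
  show ((1 : A3) * 1, DihedralGroup.r (-1) * DihedralGroup.r 1) = 1
  rw [DihedralGroup.r_mul_r, one_mul, neg_add_cancel]
  exact Prod.ext rfl DihedralGroup.one_def.symm

lemma single_rGi_mem : single rGi (1 : F) - 1 ∈ Iδ F := by
  have h : single rGi (1 : F) - 1 = -(single rGi (1 : F) * δel F) := by
    rw [δel, mul_sub, mul_one, single_mul_single, one_mul, rGi_mul_rG, ← MonoidAlgebra.one_def, neg_sub]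
  rw [h]
  exact neg_mem (Ideal.mul_mem_left _ _ (δel_mem F))

lemma δ_mul_right (z : MonoidAlgebra F Gr) : δel F * z ∈ Iδ F := by
  induction z using MonoidAlgebra.induction with
  | zero => rw [mul_zero]; exact zero_mem _
  | single_add g c f hgf hc ih =>
      rw [mul_add]
      refine add_mem ?_ ih
      have hexp : δel F * single g c = single (rG * g) c - single g c := by
        rw [δel, sub_mul, one_mul, single_mul_single, one_mul]
      rw [hexp]
      rcases g with ⟨a, x⟩
      rcases x with i | i
      · -- rotation: commutes
        have h1 : rG * ((a, DihedralGroup.r i) : Gr) = ((a, DihedralGroup.r i) : Gr) * rG := by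
          show ((1 : A3) * a, DihedralGroup.r 1 * DihedralGroup.r i)
            = (a * (1 : A3), DihedralGroup.r i * DihedralGroup.r 1)
          rw [DihedralGroup.r_mul_r, DihedralGroup.r_mul_r, one_mul, mul_one, add_comm]
        rw [h1]
        have : single (((a, DihedralGroup.r i) : Gr) * rG) c - single (a, DihedralGroup.r i) c
            = single ((a, DihedralGroup.r i) : Gr) c * δel F := by
          rw [δel, mul_sub, mul_one, single_mul_single, mul_one]
        rw [this]
        exact Ideal.mul_mem_left _ _ (δel_mem F)
      · -- reflection
        have h1 : rG * ((a, DihedralGroup.sr i) : Gr) = ((a, DihedralGroup.sr i) : Gr) * rGi := by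
          show ((1 : A3) * a, DihedralGroup.r 1 * DihedralGroup.sr i)
            = (a * (1 : A3), DihedralGroup.sr i * DihedralGroup.r (-1))
          rw [DihedralGroup.r_mul_sr, DihedralGroup.sr_mul_r, one_mul, mul_one, sub_eq_add_neg]
        rw [h1]
        have : single (((a, DihedralGroup.sr i) : Gr) * rGi) c - single (a, DihedralGroup.sr i) c
            = single ((a, DihedralGroup.sr i) : Gr) c * (single rGi (1 : F) - 1) := by
          rw [mul_sub, mul_one, single_mul_single, mul_one]
        rw [this]
        exact Ideal.mul_mem_left _ _ (single_rGi_mem F)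

lemma Iδ_pow (n : ℕ) (x : MonoidAlgebra F Gr) (hx : x ∈ Iδ F) :
    ∃ c, x ^ n = c * (δel F) ^ n := by
  induction n with
  | zero => exact ⟨1, by rw [pow_zero, pow_zero, one_mul]⟩
  | succ n ih =>
      obtain ⟨c, hc⟩ := ih
      obtain ⟨d, hd⟩ := Submodule.mem_span_singleton.mp hx
      rw [smul_eq_mul] at hd
      obtain ⟨e, he⟩ := Submodule.mem_span_singleton.mp (δ_mul_right F c)
      rw [smul_eq_mul] at he
      refine ⟨d * e, ?_⟩
      rw [pow_succ', hc, ← hd, pow_succ']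
      rw [show d * δel F * (c * δel F ^ n) = d * (δel F * c) * δel F ^ n by simp only [mul_assoc]]
      rw [← he]
      noncomm_ring

lemma δel_pow5 (hchar : CharP F 5) : (δel F) ^ 5 = 0 := by
  haveI : Fact (Nat.Prime 5) := ⟨by norm_num⟩
  haveI : CharP (MonoidAlgebra F Gr) 5 :=
    charP_of_injective_algebraMap' F 5 (A := MonoidAlgebra F Gr)
  have hc : Commute (single rG (1 : F)) (1 : MonoidAlgebra F Gr) := Commute.one_right _
  rw [δel, sub_pow_char_of_commute (x := single rG (1:F)) (y := 1) (p := 5) hc, one_pow]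
  have : (single rG (1 : F)) ^ 5 = single (rG ^ 5) ((1 : F) ^ 5) := single_pow rG 1 5
  rw [this, one_pow]
  have h5 : rG ^ 5 = 1 := by
    apply Prod.ext
    · rw [Prod.pow_fst]; exact one_pow 5
    · rw [Prod.pow_snd]
      show DihedralGroup.r 1 ^ 5 = 1
      rw [DihedralGroup.r_one_pow]
      rw [ZMod.natCast_self 5]
      exact DihedralGroup.one_def.symm
  rw [h5, ← MonoidAlgebra.one_def, sub_self]

lemma Iδ_nil (hchar : CharP F 5) (x : MonoidAlgebra F Gr) (hx : x ∈ Iδ F) : x ^ 5 = 0 := by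
  obtain ⟨c, hc⟩ := Iδ_pow F 5 x hx
  rw [hc, δel_pow5 F hchar, mul_zero]

end radical

section kernel
open MonoidAlgebra
variable {F : Type} [Field F] (ω : Fˣ) (hω : ω ^ 3 = 1)

noncomputable def ρR : MonoidAlgebra F Gr →+* (J6 → F) := (ρA ω hω).toRingHom

lemma χPi_rG : χPi ω hω rG = 1 := by
  funext j
  show ((χu ω hω j ((1 : A3), DihedralGroup.r 1) : Fˣ) : F) = 1
  rw [χu_rG]
  rfl

lemma Iδ_le_ker : Iδ F ≤ RingHom.ker (ρR ω hω) := by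
  rw [Iδ, Ideal.span_le]
  intro x hx
  rw [Set.mem_singleton_iff] at hx
  subst hx
  show ρA ω hω (δel F) = 0
  rw [δel, map_sub, map_one, ρA_single, χPi_rG, one_smul, sub_self]

lemma pow_sub_one_mem {R : Type*} [Ring R] (I : Ideal R) (x : R) (hx : x - 1 ∈ I) (n : ℕ) :
    x ^ n - 1 ∈ I := by
  induction n with
  | zero => simp
  | succ n ih =>
      have h : x ^ (n + 1) - 1 = x * (x ^ n - 1) + (x - 1) := by
        rw [pow_succ']; noncomm_ring
      rw [h]
      exact add_mem (Ideal.mul_mem_left _ _ ih) hx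

lemma single_r_mem (i : ZMod 5) :
    single (((1 : A3), DihedralGroup.r i) : Gr) (1 : F) - 1 ∈ Iδ F := by
  have hg : (((1 : A3), DihedralGroup.r i) : Gr) = rG ^ i.val := by
    apply Prod.ext
    · rw [Prod.pow_fst]; exact (one_pow _).symm
    · rw [Prod.pow_snd]
      show DihedralGroup.r i = DihedralGroup.r 1 ^ i.val
      rw [DihedralGroup.r_one_pow, ZMod.natCast_rightInverse i]
  rw [hg]
  have : single (rG ^ i.val) (1 : F) = (single rG (1 : F)) ^ i.val := by
    rw [single_pow, one_pow]
  rw [this]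
  exact pow_sub_one_mem _ _ (δel_mem F) _

lemma sub_proj_mem (f : MonoidAlgebra F Gr) : f - ψT (σG f) ∈ Iδ F := by
  induction f using MonoidAlgebra.induction_on with
  | add f g hf hg =>
      have h : (f + g) - ψT (σG (f + g))
          = (f - ψT (σG f)) + (g - ψT (σG g)) := by
        rw [map_add, map_add]; abel
      rw [h]; exact add_mem hf hg
  | smul r f hf =>
      have h : r • f - ψT (σG (r • f)) = r • (f - ψT (σG f)) := by
        rw [map_smul, map_smul, smul_sub]
      rw [h, Algebra.smul_def]
      exact Ideal.mul_mem_left _ _ hf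
  | of g =>
      have hof : (MonoidAlgebra.of F Gr) g = single g (1 : F) := rfl
      rw [hof, σG_single, ψT_single]
      rcases g with ⟨a, x⟩
      rcases x with i | i
      · have h1 : ιT (πG ((a, DihedralGroup.r i) : Gr)) = (a, (1 : Dih)) := by
          show (a, db (pD (DihedralGroup.r i))) = (a, (1 : Dih))
          have : pD (DihedralGroup.r i) = 1 := rfl
          rw [this, map_one]
        rw [h1]
        have h2 : single ((a, DihedralGroup.r i) : Gr) (1 : F)
              - single ((a, (1 : Dih)) : Gr) (1 : F)
            = single ((a, (1 : Dih)) : Gr) (1 : F)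
              * (single (((1 : A3), DihedralGroup.r i) : Gr) (1 : F) - 1) := by
          rw [mul_sub, mul_one, single_mul_single, mul_one]
          congr 2
          apply Prod.ext
          · exact (mul_one a).symm
          · exact (one_mul _).symm
        rw [h2]
        exact Ideal.mul_mem_left _ _ (single_r_mem i)
      · have h1 : ιT (πG ((a, DihedralGroup.sr i) : Gr)) = (a, DihedralGroup.sr 0) := by
          show (a, db (pD (DihedralGroup.sr i))) = (a, DihedralGroup.sr 0)
          have hp : pD (DihedralGroup.sr i) = Multiplicative.ofAdd (1 : ZMod 2) := rfl
          rw [hp]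
          have hd : db (Multiplicative.ofAdd (1 : ZMod 2)) = DihedralGroup.sr 0 := by
            show (DihedralGroup.sr 0 : Dih) ^ (1 : ZMod 2).val = _
            rw [ZMod.val_one, pow_one]
          rw [hd]
        rw [h1]
        have h2 : single ((a, DihedralGroup.sr i) : Gr) (1 : F)
              - single ((a, DihedralGroup.sr 0) : Gr) (1 : F)
            = single ((a, DihedralGroup.sr 0) : Gr) (1 : F)
              * (single (((1 : A3), DihedralGroup.r i) : Gr) (1 : F) - 1) := by
          rw [mul_sub, mul_one, single_mul_single, mul_one]
          congr 2
          apply Prod.ext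
          · exact (mul_one a).symm
          · show DihedralGroup.sr i = DihedralGroup.sr 0 * DihedralGroup.r i
            rw [DihedralGroup.sr_mul_r, zero_add]
        rw [h2]
        exact Ideal.mul_mem_left _ _ (single_r_mem i)

lemma ker_le_Iδ (hord : orderOf ω = 3) (hne : (-1 : Fˣ) ≠ 1) :
    RingHom.ker (ρR ω hω) ≤ Iδ F := by
  intro f hf
  have h1 : f - ψT (σG f) ∈ Iδ F := sub_proj_mem f
  have h2 : τT ω hω (σG f) = 0 := by
    show ρA ω hω (ψT (σG f)) = 0
    have h3 : ρA ω hω (f - ψT (σG f)) = 0 := Iδ_le_ker ω hω h1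
    rw [map_sub] at h3
    have h4 : ρA ω hω f = 0 := hf
    rw [h4, zero_sub, neg_eq_zero] at h3
    exact h3
  have h5 : σG f = 0 := τT_injective ω hω hord hne (by rw [h2, map_zero])
  rw [h5, map_zero, sub_zero] at h1
  exact h1

end kernel

section jac
open MonoidAlgebra
variable {F : Type} [Field F] (ω : Fˣ) (hω : ω ^ 3 = 1)

lemma jacobson_eq (hchar : CharP F 5) (hord : orderOf ω = 3) (hne : (-1 : Fˣ) ≠ 1) :
    Ideal.jacobson (⊥ : Ideal (MonoidAlgebra F Gr)) = RingHom.ker (ρR ω hω) := by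
  apply le_antisymm
  · intro x hx
    have hx' : ∀ j : J6, x ∈ RingHom.ker ((Pi.evalRingHom (fun _ : J6 => F) j).comp (ρR ω hω)) := by
      intro j
      have hsurj : Function.Surjective ((Pi.evalRingHom (fun _ : J6 => F) j).comp (ρR ω hω)) := by
        intro c
        refine ⟨algebraMap F _ c, ?_⟩
        show (ρA ω hω) (algebraMap F _ c) j = c
        rw [AlgHom.commutes]
        rfl
      haveI hmax : (RingHom.ker ((Pi.evalRingHom (fun _ : J6 => F) j).comp (ρR ω hω))).IsMaximal :=
        RingHom.ker_isMaximal_of_surjective _ hsurj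
      exact Ideal.mem_sInf.mp hx ⟨bot_le, hmax⟩
    show ρA ω hω x = 0
    funext j
    exact hx' j
  · intro x hx
    refine Ideal.mem_sInf.mpr ?_
    rintro M ⟨-, hM⟩
    by_contra hxM
    have hlt : M < M ⊔ Ideal.span {x} := by
      refine lt_of_le_of_ne le_sup_left (fun h => hxM ?_)
      have hsp : Ideal.span {x} ≤ M := h ▸ le_sup_right
      exact hsp (Ideal.subset_span rfl)
    have htop : M ⊔ Ideal.span {x} = ⊤ := hM.out.2 _ hlt
    have h1 : (1 : MonoidAlgebra F Gr) ∈ M ⊔ Ideal.span {x} := htop ▸ Submodule.mem_top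
    obtain ⟨m, hm, z, hz, hmz⟩ := Submodule.mem_sup.mp h1
    obtain ⟨c, hc⟩ := Submodule.mem_span_singleton.mp hz
    rw [smul_eq_mul] at hc
    have hcx : c * x ∈ RingHom.ker (ρR ω hω) := Ideal.mul_mem_left _ _ hx
    have hmem : c * x ∈ Iδ F := ker_le_Iδ ω hω hord hne hcx
    have hnil : IsNilpotent (c * x) := ⟨5, Iδ_nil F hchar _ hmem⟩
    have hmeq : m = 1 - c * x := by rw [← hmz, ← hc]; noncomm_ring
    have hu : IsUnit m := hmeq ▸ hnil.isUnit_one_sub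
    exact hM.out.1 (M.eq_top_of_isUnit_mem hm hu)

end jac

section final
open MonoidAlgebra

theorem stmt_15_aux (F : Type) [Field F] [Fintype F] (k : ℕ) (hk : 0 < k)
    (hchar : CharP F 5) (hcard : Fintype.card F = 5 ^ k)
    (hq : 5 ^ k % 6 = 1) :
    ∃ H : Subgroup (MonoidAlgebra F Gr)ˣ,
      (∀ u : (MonoidAlgebra F Gr)ˣ,
        u ∈ H ↔ (u : MonoidAlgebra F Gr) - 1 ∈ Ideal.jacobson (⊥ : Ideal (MonoidAlgebra F Gr))) ∧
      ∃ φ : (Fin 6 → Multiplicative (ZMod (5 ^ k - 1))) →* MulAut H,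
        Nonempty ((MonoidAlgebra F Gr)ˣ ≃*
          H ⋊[φ] (Fin 6 → Multiplicative (ZMod (5 ^ k - 1)))) := by
  classical
  -- cardinality facts
  have hcardu : Nat.card Fˣ = 5 ^ k - 1 := by
    rw [Nat.card_eq_fintype_card, Fintype.card_units, hcard]
  have hqbig : 2 ≤ 5 ^ k := by
    calc 2 ≤ 5 ^ 1 := by norm_num
    _ ≤ 5 ^ k := Nat.pow_le_pow_right (by norm_num) hk
  have h6 : 6 ∣ 5 ^ k - 1 := by
    have h := Nat.div_add_mod (5 ^ k) 6
    rw [hq] at h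
    omega
  have h3 : 3 ∣ 5 ^ k - 1 := dvd_trans (by norm_num) h6
  have hNpos : 0 < 5 ^ k - 1 := by omega
  -- an element of order 3
  obtain ⟨g, hg⟩ := IsCyclic.exists_ofOrder_eq_natCard (α := Fˣ)
  set ω : Fˣ := g ^ ((5 ^ k - 1) / 3) with hωdef
  have hord : orderOf ω = 3 := by
    rw [hωdef, orderOf_pow, hg, hcardu]
    rw [Nat.gcd_eq_right (Nat.div_dvd_of_dvd h3)]
    exact Nat.div_div_self h3 hNpos.ne'
  have hω : ω ^ 3 = 1 := by rw [← hord]; exact pow_orderOf_eq_one ω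
  have hne : (-1 : Fˣ) ≠ 1 := by
    intro h
    have h' : (-1 : F) = 1 := by
      have := congrArg (Units.val) h
      simpa using this
    have hch2 : ringChar F ≠ 2 := by rw [ringChar.eq F 5]; norm_num
    exact Ring.neg_one_ne_one_of_char_ne_two hch2 h'
  -- ring-theoretic section
  have hbij := τT_bijective ω hω hord hne
  let θ : MonoidAlgebra F Tg ≃+* (J6 → F) :=
    RingEquiv.ofBijective ((τT ω hω : MonoidAlgebra F Tg →ₐ[F] (J6 → F)) :
      MonoidAlgebra F Tg →+* (J6 → F)) hbij
  let sectR : (J6 → F) →+* MonoidAlgebra F Gr :=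
    (ψT.toRingHom : MonoidAlgebra F Tg →+* MonoidAlgebra F Gr).comp θ.symm.toRingHom
  have hsect : ∀ x, ρR ω hω (sectR x) = x := by
    intro x
    show ρA ω hω (ψT (θ.symm x)) = x
    calc ρA ω hω (ψT (θ.symm x)) = τT ω hω (θ.symm x) := rfl
    _ = θ (θ.symm x) := rfl
    _ = x := θ.apply_symm_apply x
  -- units level
  let Pz : (MonoidAlgebra F Gr)ˣ →* (J6 → F)ˣ := Units.map (ρR ω hω).toMonoidHom
  let S0 : (J6 → F)ˣ →* (MonoidAlgebra F Gr)ˣ := Units.map sectR.toMonoidHom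
  -- the cyclic equivalence
  haveI : IsCyclic Fˣ := inferInstance
  have E2 : Multiplicative (ZMod (5 ^ k - 1)) ≃* Fˣ := by
    rw [← hcardu]; exact zmodCyclicMulEquiv inferInstance
  let e6 : Fin 6 ≃ J6 := Fintype.equivOfCardEq (by
    simp [Fintype.card_prod, ZMod.card])
  let EQ : (J6 → F)ˣ ≃* (Fin 6 → Multiplicative (ZMod (5 ^ k - 1))) :=
    myPiUnits.trans ((MulEquiv.piCongrRight fun _ : J6 => E2.symm).trans
      (myPiCongrLeft (Multiplicative (ZMod (5 ^ k - 1))) e6.symm))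
  let PP : (MonoidAlgebra F Gr)ˣ →* (Fin 6 → Multiplicative (ZMod (5 ^ k - 1))) :=
    EQ.toMonoidHom.comp Pz
  let SS : (Fin 6 → Multiplicative (ZMod (5 ^ k - 1))) →* (MonoidAlgebra F Gr)ˣ :=
    S0.comp EQ.symm.toMonoidHom
  have hPS : ∀ q, PP (SS q) = q := by
    intro q
    show EQ (Pz (S0 (EQ.symm q))) = q
    have h1 : Pz (S0 (EQ.symm q)) = EQ.symm q := by
      apply Units.ext
      show (ρR ω hω) ((sectR : (J6 → F) →+* MonoidAlgebra F Gr) ((EQ.symm q : (J6 → F)ˣ) : J6 → F)) = _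
      rw [hsect]
    rw [h1, EQ.apply_symm_apply]
  obtain ⟨iso⟩ := mySplitting PP SS hPS
  refine ⟨PP.ker, ?_, (MulAut.conjNormal (H := PP.ker)).comp SS, ⟨iso⟩⟩
  intro u
  rw [MonoidHom.mem_ker]
  have hchain : PP u = 1 ↔ ρR ω hω (u : MonoidAlgebra F Gr) = 1 := by
    constructor
    · intro h
      have h1 : Pz u = 1 := by
        have h2 : EQ (Pz u) = 1 := h
        have h3 := congrArg EQ.symm h2
        rwa [EQ.symm_apply_apply, map_one] at h3
      exact congrArg Units.val h1
    · intro h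
      have h1 : Pz u = 1 := Units.ext h
      show EQ (Pz u) = 1
      rw [h1, map_one]
  rw [hchain, jacobson_eq ω hω hchar hord hne]
  have : ρR ω hω ((u : MonoidAlgebra F Gr) - 1) = ρR ω hω (u : MonoidAlgebra F Gr) - 1 := by
    rw [map_sub, map_one]
  constructor
  · intro h
    show ρR ω hω ((u : MonoidAlgebra F Gr) - 1) = 0
    rw [this, h, sub_self]
  · intro h
    have h' : ρR ω hω ((u : MonoidAlgebra F Gr) - 1) = 0 := h
    rw [this, sub_eq_zero] at h'
    exact h'

end final

/-- For `F` a finite field with `5^k` elements, `5^k ≡ 1 (mod 6)`, and `G = C₃ × D₁₀`,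
the unit group of `FG` is isomorphic to `V ⋊ C_{5^k-1}⁶` where `V = 1 + J(FG)`. -/
theorem stmt_15 (F : Type) [Field F] [Fintype F] (k : ℕ) (hk : 0 < k)
    (hchar : CharP F 5) (hcard : Fintype.card F = 5 ^ k)
    (hq : 5 ^ k % 6 = 1) :
    let G := Multiplicative (ZMod 3) × DihedralGroup 5
    ∃ H : Subgroup (MonoidAlgebra F G)ˣ,
      (∀ u : (MonoidAlgebra F G)ˣ,
        u ∈ H ↔ (u : MonoidAlgebra F G) - 1 ∈ Ideal.jacobson (⊥ : Ideal (MonoidAlgebra F G))) ∧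
      ∃ φ : (Fin 6 → Multiplicative (ZMod (5 ^ k - 1))) →* MulAut H,
        Nonempty ((MonoidAlgebra F G)ˣ ≃*
          H ⋊[φ] (Fin 6 → Multiplicative (ZMod (5 ^ k - 1)))) := by
  intro G
  exact stmt_15_aux F k hk hchar hcard hq
end
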